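/- Let g ≥ 1, and for 1 ≤ i ≤ g let X_i ≥ 1 be real numbers; let R = {x ∈ ℤ^g : |x_i| ≤ X_i for all i}. Let y ≥ 2 and for each prime p ≤ y let Ω(p) ⊆ (ℤ/pℤ)^g with |Ω(p)| = ω(p). Set P(y) = Σ_{p ≤ y} ω(p) p^{−g}, and for a ∈ ℤ^g let P(a,y) = #{p ≤ y : a mod p ∈ Ω(p)}. Then Σ_{a ∈ R} (P(a,y) − P(y))^2 ≤ C_g · P(y) · ∏_{i=1}^g (X_i + y^2), where C_g is a constant depending only on g. -/

import Mathlib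

set_option maxHeartbeats 1000000

open Finset Complex

noncomputable def Complex.abs : AbsoluteValue ℂ ℝ where
  toFun := fun z => ‖z‖
  map_mul' := norm_mul
  nonneg' := norm_nonneg
  eq_zero' := fun _ => norm_eq_zero
  add_le' := norm_add_le

lemma Complex.abs_exp (z : ℂ) : Complex.abs (Complex.exp z) = Real.exp z.re := Complex.norm_exp z
lemma Complex.sq_abs (z : ℂ) : Complex.abs z ^ 2 = Complex.normSq z := Complex.sq_norm z
lemma Complex.abs_ofReal (r : ℝ) : Complex.abs (r : ℂ) = |r| := by
  show ‖(r:ℂ)‖ = |r|; simp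
lemma Complex.abs_conj (z : ℂ) : Complex.abs ((starRingEnd ℂ) z) = Complex.abs z := by
  show ‖(starRingEnd ℂ) z‖ = ‖z‖; simp


noncomputable def ee (t : ℝ) : ℂ := Complex.exp (2 * Real.pi * Complex.I * t)

lemma ee_add (s t : ℝ) : ee (s + t) = ee s * ee t := by
  simp [ee, mul_add, Complex.exp_add, Complex.ofReal_add]

lemma ee_sum {α : Type*} (s : Finset α) (f : α → ℝ) : ee (∑ x ∈ s, f x) = ∏ x ∈ s, ee (f x) := by
  simp only [ee, Complex.ofReal_sum, Finset.mul_sum, Complex.exp_sum]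

lemma ee_zero : ee 0 = 1 := by simp [ee]

lemma ee_int (n : ℤ) : ee n = 1 := by
  rw [ee, show (2 * (Real.pi:ℂ) * Complex.I * (n:ℝ)) = (n:ℤ) * (2 * Real.pi * Complex.I) by push_cast; ring,
    Complex.exp_int_mul_two_pi_mul_I]

lemma ee_nat_mul (n : ℕ) (t : ℝ) : ee (n * t) = ee t ^ n := by
  rw [ee, show (2 * (Real.pi:ℂ) * Complex.I * ((n:ℝ)*t:ℝ)) = (n:ℕ) * (2 * Real.pi * Complex.I * t) by push_cast; ring,
    Complex.exp_nat_mul, ee]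

lemma conj_ee (t : ℝ) : (starRingEnd ℂ) (ee t) = ee (-t) := by
  rw [ee, ← Complex.exp_conj, ee]
  congr 1
  simp only [map_mul, Complex.conj_I, Complex.conj_ofReal, map_ofNat]
  push_cast
  ring

lemma norm_ee (t : ℝ) : Complex.abs (ee t) = 1 := by
  rw [ee, Complex.abs_exp]
  norm_num [Complex.mul_re]

lemma ee_eq_one_iff {t : ℝ} : ee t = 1 ↔ ∃ n : ℤ, t = n := by
  rw [ee, Complex.exp_eq_one_iff]
  have h2 : (2 * (Real.pi:ℂ) * Complex.I) ≠ 0 := by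
    simp [Real.pi_ne_zero, Complex.I_ne_zero, Complex.ofReal_ne_zero, two_ne_zero]
  constructor
  · rintro ⟨n, hn⟩
    refine ⟨n, ?_⟩
    have h3 : (2 * (Real.pi:ℂ) * Complex.I) * t = (2 * (Real.pi:ℂ) * Complex.I) * n := by
      rw [hn]; ring
    have := mul_left_cancel₀ h2 h3
    exact_mod_cast this
  · rintro ⟨n, rfl⟩
    exact ⟨n, by push_cast; ring⟩

-- distance to nearest integer
noncomputable def dZ (t : ℝ) : ℝ := |t - round t|

lemma dZ_nonneg (t : ℝ) : 0 ≤ dZ t := abs_nonneg _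
lemma dZ_le_half (t : ℝ) : dZ t ≤ 1/2 := abs_sub_round t
lemma dZ_eq_min (t : ℝ) : dZ t = min (Int.fract t) (1 - Int.fract t) := abs_sub_round_eq_min t

lemma dZ_add_int (t : ℝ) (n : ℤ) : dZ (t + n) = dZ t := by
  rw [dZ_eq_min, dZ_eq_min, Int.fract_add_intCast]

lemma dZ_le_abs (t : ℝ) : dZ t ≤ |t| := by
  rcases le_or_gt (1/2) (|t|) with h | h
  · exact (dZ_le_half t).trans h
  · have h1 : round t = 0 := by
      rw [round_eq]
      rw [Int.floor_eq_zero_iff]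
      rcases abs_lt.1 h with ⟨h2, h3⟩
      constructor
      · simp; linarith
      · simp; linarith
    simp [dZ, h1]

lemma dZ_sub_le (x y : ℝ) : dZ (x - y) ≤ |Int.fract x - Int.fract y| := by
  have : x - y = (Int.fract x - Int.fract y) + ((⌊x⌋ : ℤ) - ⌊y⌋) := by
    rw [Int.fract, Int.fract]; push_cast; ring
  rw [this, show ((⌊x⌋:ℝ) - ⌊y⌋) = ((⌊x⌋ - ⌊y⌋ : ℤ) : ℝ) by push_cast; ring, dZ_add_int]
  exact dZ_le_abs _

lemma dZ_int_div {k : ℤ} {n : ℕ} (hn : 0 < n) (h : ¬ (n:ℤ) ∣ k) : 1/(n:ℝ) ≤ dZ ((k:ℝ)/n) := by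
  rw [dZ]
  have h1 : (k:ℝ)/n - round ((k:ℝ)/n) = ((k - n * round ((k:ℝ)/n) : ℤ) : ℝ) / n := by
    push_cast; field_simp
  rw [h1, abs_div, _root_.abs_of_nonneg (by positivity : (0:ℝ) ≤ (n:ℝ))]
  have h2 : k - (n:ℤ) * round ((k:ℝ)/n) ≠ 0 := by
    intro h3
    exact h ⟨round ((k:ℝ)/n), by linarith [h3]⟩
  have h4 : (1:ℝ) ≤ |((k - n * round ((k:ℝ)/n) : ℤ) : ℝ)| := by
    rw [← Int.cast_abs]
    exact_mod_cast Int.one_le_abs (by exact_mod_cast h2)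
  have hn' : (0:ℝ) < n := by exact_mod_cast hn
  gcongr


lemma dZ_neg (t : ℝ) : dZ (-t) = dZ t := by
  rcases eq_or_ne (Int.fract t) 0 with h | h
  · rcases Int.fract_eq_iff.1 h with ⟨-, -, n, hn⟩
    have : t = n := by linarith
    subst this
    rw [show -(n:ℝ) = ((-n : ℤ) : ℝ) by push_cast; ring]
    rw [dZ_eq_min, dZ_eq_min, Int.fract_intCast, Int.fract_intCast]
  · rw [dZ_eq_min, dZ_eq_min, Int.fract_neg h]
    rw [min_comm]
    congr 1 <;> ring

lemma sin_pi_abs_ge (t : ℝ) : 2 * dZ t ≤ |Real.sin (Real.pi * t)| := by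
  have key : |Real.sin (Real.pi * t)| = |Real.sin (Real.pi * (t - round t))| := by
    have : Real.pi * t = Real.pi * (t - round t) + round t * Real.pi := by ring
    rw [this, Real.sin_add, Real.sin_int_mul_pi, mul_zero, add_zero, abs_mul]
    have hc : |Real.cos ((round t : ℝ) * Real.pi)| = 1 := by
      have hs : Real.sin ((round t : ℝ) * Real.pi) = 0 := Real.sin_int_mul_pi _
      have := Real.sin_sq_add_cos_sq ((round t : ℝ) * Real.pi)
      rw [hs] at this
      nlinarith [abs_nonneg (Real.cos ((round t:ℝ) * Real.pi)), _root_.sq_abs (Real.cos ((round t:ℝ) * Real.pi))]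
    rw [hc, mul_one]
  rw [key]
  set d := t - round t with hd
  have hdz : dZ t = |d| := rfl
  have h1 : |Real.sin (Real.pi * d)| = Real.sin (Real.pi * |d|) := by
    rcases le_or_gt 0 d with h | h
    · rw [_root_.abs_of_nonneg h, _root_.abs_of_nonneg]
      apply Real.sin_nonneg_of_nonneg_of_le_pi
      · positivity
      · have := dZ_le_half t; rw [hdz, _root_.abs_of_nonneg h] at this
        nlinarith [Real.pi_pos]
    · rw [abs_of_neg h, show Real.pi * d = -(Real.pi * -d) by ring, Real.sin_neg, abs_neg,
        _root_.abs_of_nonneg]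
      apply Real.sin_nonneg_of_nonneg_of_le_pi
      · nlinarith [Real.pi_pos]
      · have := dZ_le_half t; rw [hdz, _root_.abs_of_neg h] at this
        nlinarith [Real.pi_pos]
  rw [h1, hdz]
  have h2 : 2 / Real.pi * (Real.pi * |d|) ≤ Real.sin (Real.pi * |d|) := by
    apply Real.mul_le_sin (by positivity)
    have := dZ_le_half t; rw [hdz] at this
    nlinarith [Real.pi_pos]
  have h3 : 2 / Real.pi * (Real.pi * |d|) = 2 * |d| := by
    field_simp
  linarith [h3 ▸ h2]

lemma norm_ee_sub_one (t : ℝ) : 4 * dZ t ≤ Complex.abs (ee t - 1) := by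
  have habs : Complex.abs (ee t - 1) = 2 * |Real.sin (Real.pi * t)| := by
    have h1 : ee t = Complex.exp ((2 * Real.pi * t : ℝ) * Complex.I) := by
      rw [ee]; congr 1; push_cast; ring
    rw [h1, Complex.exp_mul_I]
    have : Complex.cos (2 * Real.pi * t : ℝ) + Complex.sin (2 * Real.pi * t : ℝ) * Complex.I - 1
        = Complex.ofReal (Real.cos (2 * Real.pi * t) - 1) + Complex.ofReal (Real.sin (2 * Real.pi * t)) * Complex.I := by
      push_cast [Complex.ofReal_cos, Complex.ofReal_sin]; ring
    rw [this]
    have hsq : (Complex.abs (Complex.ofReal (Real.cos (2 * Real.pi * t) - 1) + Complex.ofReal (Real.sin (2 * Real.pi * t)) * Complex.I))^2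
        = (Real.cos (2*Real.pi*t) - 1)^2 + (Real.sin (2*Real.pi*t))^2 := by
      rw [Complex.sq_abs, Complex.normSq_add_mul_I]
    have hcos : Real.cos (2 * Real.pi * t) = 1 - 2 * Real.sin (Real.pi * t)^2 := by
      rw [show 2 * Real.pi * t = 2 * (Real.pi * t) by ring, Real.cos_two_mul']
      have := Real.sin_sq_add_cos_sq (Real.pi * t)
      linarith
    have : (Complex.abs (Complex.ofReal (Real.cos (2 * Real.pi * t) - 1) + Complex.ofReal (Real.sin (2 * Real.pi * t)) * Complex.I))^2
        = (2 * |Real.sin (Real.pi * t)|)^2 := by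
      rw [hsq, hcos]
      have : Real.sin (2 * Real.pi * t) = 2 * Real.sin (Real.pi * t) * Real.cos (Real.pi * t) := by
        rw [show 2 * Real.pi * t = 2 * (Real.pi * t) by ring, Real.sin_two_mul]
      rw [this]
      have hpyth := Real.sin_sq_add_cos_sq (Real.pi * t)
      have := _root_.sq_abs (Real.sin (Real.pi * t))
      nlinarith
    have h2 := abs_nonneg (Real.sin (Real.pi * t))
    set A := Complex.abs (Complex.ofReal (Real.cos (2 * Real.pi * t) - 1) + Complex.ofReal (Real.sin (2 * Real.pi * t)) * Complex.I) with hA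
    have hA0 : 0 ≤ A := Complex.abs.nonneg _
    have hB0 : 0 ≤ 2 * |Real.sin (Real.pi * t)| := by positivity
    calc A = Real.sqrt (A^2) := (Real.sqrt_sq hA0).symm
      _ = Real.sqrt ((2 * |Real.sin (Real.pi * t)|)^2) := by rw [this]
      _ = 2 * |Real.sin (Real.pi * t)| := Real.sqrt_sq hB0
  rw [habs]
  linarith [sin_pi_abs_ge t]

noncomputable def DD (N : ℕ) (t : ℝ) : ℂ := ∑ n ∈ range N, ee (n * t)

lemma norm_DD_le (N : ℕ) (t : ℝ) : Complex.abs (DD N t) ≤ N := by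
  calc Complex.abs (DD N t) ≤ ∑ n ∈ range N, Complex.abs (ee (n*t)) := by
        exact (Complex.abs.sum_le _ _)
    _ = N := by simp [norm_ee]

lemma norm_DD_le_inv {N : ℕ} {t : ℝ} (h : 0 < dZ t) : Complex.abs (DD N t) ≤ 1 / (2 * dZ t) := by
  have hne : ee t ≠ 1 := by
    intro hc
    rcases ee_eq_one_iff.1 hc with ⟨n, rfl⟩
    rw [dZ_eq_min, Int.fract_intCast] at h
    norm_num at h
  have hgeom : DD N t = ((ee t)^N - 1)/(ee t - 1) := by
    rw [DD]
    simp_rw [ee_nat_mul]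
    exact geom_sum_eq hne N
  rw [hgeom, map_div₀]
  have h1 : Complex.abs ((ee t)^N - 1) ≤ 2 := by
    calc Complex.abs ((ee t)^N - 1) ≤ Complex.abs ((ee t)^N) + 1 := by
          simpa using Complex.abs.sub_le_add ((ee t)^N) 1
      _ ≤ 2 := by rw [map_pow, norm_ee]; norm_num
  have h2 := norm_ee_sub_one t
  have h3 : 0 < Complex.abs (ee t - 1) := lt_of_lt_of_le (by linarith) h2
  rw [div_le_div_iff₀ h3 (by linarith)]
  nlinarith

lemma sum_inv_sq_le (M : ℕ) : ∑ k ∈ range M, (1:ℝ)/(((k:ℝ)+1)^2) ≤ 2 := by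
  have key : ∀ m : ℕ, ∑ k ∈ range m, (1:ℝ)/(((k:ℝ)+1)^2) ≤ 2 - 2/((m:ℝ)+1) := by
    intro m
    induction m with
    | zero => norm_num
    | succ n ih =>
      rw [Finset.sum_range_succ]
      have h1 : (1:ℝ)/(((n:ℝ)+1)^2) ≤ 2/((n:ℝ)+1) - 2/((n:ℝ)+1+1) := by
        rw [div_sub_div _ _ (by positivity) (by positivity), div_le_div_iff₀ (by positivity) (by positivity)]
        ring_nf
        nlinarith [sq_nonneg ((n:ℝ)+1)]
      push_cast
      linarith
  have h2 : (0:ℝ) ≤ 2/((M:ℝ)+1) := by positivity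
  linarith [key M]

def wN (N : ℕ) (n : ℤ) : ℕ :=
  (((range N) ×ˢ (range N)).filter (fun jk => (jk.1 : ℤ) - (jk.2 : ℤ) = n)).card

lemma wN_ge {N : ℕ} {n : ℤ} (h : n.natAbs < N) : N - n.natAbs ≤ wN N n := by
  rw [wN]
  have := Finset.card_le_card_of_injOn
    (f := fun k : ℕ => if 0 ≤ n then (k + n.natAbs, k) else (k, k + n.natAbs))
    (s := range (N - n.natAbs))
    (t := ((range N) ×ˢ (range N)).filter (fun jk => (jk.1 : ℤ) - (jk.2 : ℤ) = n))
    ?_ ?_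
  · simpa using this
  · intro k hk
    rw [mem_coe, mem_range] at hk
    have hkN : k < N := lt_of_lt_of_le hk (Nat.sub_le _ _)
    have hkn : k + n.natAbs < N := by omega
    rcases le_or_gt 0 n with hn | hn
    · simp only [if_pos hn, mem_coe, mem_filter, mem_product, mem_range]
      refine ⟨⟨hkn, hkN⟩, ?_⟩
      omega
    · simp only [if_neg (not_le.2 hn), mem_coe, mem_filter, mem_product, mem_range]
      refine ⟨⟨hkN, hkn⟩, ?_⟩
      omega
  · intro a _ b _ hab
    rcases le_or_gt 0 n with hn | hn
    · simp only [if_pos hn, Prod.mk.injEq] at hab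
      exact hab.2
    · simp only [if_neg (not_le.2 hn), Prod.mk.injEq] at hab
      exact hab.1

lemma kernel_identity (N : ℕ) (u : ℝ) :
    ∑ n ∈ Finset.Ioo (-(N:ℤ)) N, (wN N n : ℂ) * ee (n * u)
      = ((Complex.normSq (DD N u) : ℝ) : ℂ) := by
  have hmaps : ∀ jk ∈ (range N) ×ˢ (range N), ((jk.1:ℤ) - jk.2) ∈ Finset.Ioo (-(N:ℤ)) N := by
    intro jk hjk
    simp only [mem_product, mem_range] at hjk
    simp only [Finset.mem_Ioo]
    omega
  calc ∑ n ∈ Finset.Ioo (-(N:ℤ)) N, (wN N n : ℂ) * ee (n * u)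
      = ∑ n ∈ Finset.Ioo (-(N:ℤ)) N, ∑ jk ∈ ((range N) ×ˢ (range N)).filter
          (fun jk => ((jk.1:ℤ) - jk.2) = n), ee ((((jk.1:ℤ) - jk.2 : ℤ):ℝ) * u) := by
        apply Finset.sum_congr rfl
        intro n hn
        have hconst : ∀ jk ∈ ((range N) ×ˢ (range N)).filter (fun jk => ((jk.1:ℤ) - jk.2) = n),
            ee ((((jk.1:ℤ) - jk.2 : ℤ):ℝ) * u) = ee ((n:ℝ) * u) := by
          intro jk hjk
          rw [mem_filter] at hjk
          rw [hjk.2]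
        rw [Finset.sum_congr rfl hconst, Finset.sum_const, wN, nsmul_eq_mul]
    _ = ∑ jk ∈ (range N) ×ˢ (range N), ee ((((jk.1:ℤ) - jk.2 : ℤ):ℝ) * u) :=
        Finset.sum_fiberwise_of_maps_to hmaps _
    _ = ∑ j ∈ range N, ∑ k ∈ range N, ee ((j:ℝ) * u) * ee (-((k:ℝ) * u)) := by
        rw [Finset.sum_product]
        apply Finset.sum_congr rfl; intro j _
        apply Finset.sum_congr rfl; intro k _
        rw [← ee_add]
        congr 1
        push_cast
        ring
    _ = (∑ j ∈ range N, ee ((j:ℝ) * u)) * ∑ k ∈ range N, ee (-((k:ℝ) * u)) := by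
        rw [Finset.sum_mul_sum]
    _ = DD N u * (starRingEnd ℂ) (DD N u) := by
        rw [DD, map_sum]
        congr 1
        apply Finset.sum_congr rfl
        intro k _
        rw [conj_ee]
    _ = ((Complex.normSq (DD N u) : ℝ) : ℂ) := Complex.mul_conj _

lemma normSq_DD_le_sq (N : ℕ) (t : ℝ) : Complex.normSq (DD N t) ≤ (N:ℝ)^2 := by
  rw [← Complex.sq_abs]
  have h := norm_DD_le N t
  nlinarith [Complex.abs.nonneg (DD N t)]

lemma normSq_DD_le_inv {N : ℕ} {t : ℝ} (h : 0 < dZ t) :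
    Complex.normSq (DD N t) ≤ 1 / (4 * dZ t ^ 2) := by
  rw [← Complex.sq_abs]
  have h1 := norm_DD_le_inv (N := N) h
  have h2 : Complex.abs (DD N t) ^ 2 ≤ (1 / (2 * dZ t)) ^ 2 :=
    pow_le_pow_left₀ (Complex.abs.nonneg _) h1 2
  have h3 : (1 / (2 * dZ t)) ^ 2 = 1 / (4 * dZ t ^ 2) := by
    rw [div_pow]
    ring_nf
  linarith [h3 ▸ h2]

lemma DD_neg (N : ℕ) (t : ℝ) : DD N (-t) = (starRingEnd ℂ) (DD N t) := by
  rw [DD, DD, map_sum]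
  apply Finset.sum_congr rfl
  intro n _
  rw [conj_ee]
  congr 1
  ring

lemma normSq_DD_neg (N : ℕ) (t : ℝ) : Complex.normSq (DD N (-t)) = Complex.normSq (DD N t) := by
  rw [DD_neg, Complex.normSq_conj]

noncomputable def Gk (N : ℕ) (u : ℝ) : ℝ := 2/(N:ℝ) * Complex.normSq (DD N u)
lemma Gk_nonneg (N : ℕ) (u : ℝ) : 0 ≤ Gk N u := by
  rw [Gk]
  have := Complex.normSq_nonneg (DD N u)
  positivity

noncomputable def psi (M N : ℕ) (m : ℕ) : ℝ :=
  if m = 0 then 2*(N:ℝ) else (M:ℝ)^2/(2*(N:ℝ)*((m:ℝ))^2)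

lemma psi_nonneg (M N m : ℕ) : 0 ≤ psi M N m := by
  rw [psi]; split <;> positivity

lemma sum_psi_le (M N : ℕ) (hM : 1 ≤ M) (hN : 1 ≤ N) :
    ∑ k ∈ range M, psi M N k ≤ 2*(N:ℝ) + (M:ℝ)^2/(N:ℝ) := by
  obtain ⟨m, rfl⟩ : ∃ m, M = m + 1 := ⟨M - 1, by omega⟩
  rw [Finset.sum_range_succ']
  have h0 : psi (m+1) N 0 = 2*(N:ℝ) := by rw [psi]; simp
  have h1 : ∑ k ∈ range m, psi (m+1) N (k+1)
      = ((m:ℝ)+1)^2/(2*(N:ℝ)) * ∑ k ∈ range m, (1:ℝ)/(((k:ℝ)+1)^2) := by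
    rw [Finset.mul_sum]
    apply Finset.sum_congr rfl
    intro k _
    rw [psi, if_neg (Nat.succ_ne_zero k)]
    push_cast
    field_simp
  rw [h0, h1]
  have h2 := sum_inv_sq_le m
  have h3 : (0:ℝ) < ((m:ℝ)+1)^2/(2*(N:ℝ)) := by positivity
  have h4 : ((m:ℝ)+1)^2/(2*(N:ℝ)) * ∑ k ∈ range m, (1:ℝ)/(((k:ℝ)+1)^2)
      ≤ ((m:ℝ)+1)^2/(2*(N:ℝ)) * 2 := by
    apply mul_le_mul_of_nonneg_left h2 (le_of_lt h3)
  have h5 : ((m:ℝ)+1)^2/(2*(N:ℝ)) * 2 = ((m+1:ℕ):ℝ)^2/(N:ℝ) := by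
    push_cast; field_simp
  push_cast at *
  linarith

-- the per-box bound function
noncomputable def phiB (M N : ℕ) (k : ℕ) : ℝ := psi M N (min k (M - 1 - k))

lemma sum_phiB_le (M N : ℕ) (hM : 1 ≤ M) (hN : 1 ≤ N) :
    ∑ k ∈ range M, phiB M N k ≤ 4*(N:ℝ) + 2*(M:ℝ)^2/(N:ℝ) := by
  have h1 : ∀ k, phiB M N k ≤ psi M N k + psi M N (M - 1 - k) := by
    intro k
    rw [phiB]
    rcases min_choice k (M - 1 - k) with h | h <;> rw [h]
    · linarith [psi_nonneg M N (M - 1 - k)]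
    · linarith [psi_nonneg M N k]
  calc ∑ k ∈ range M, phiB M N k ≤ ∑ k ∈ range M, (psi M N k + psi M N (M - 1 - k)) :=
        Finset.sum_le_sum (fun k _ => h1 k)
    _ = ∑ k ∈ range M, psi M N k + ∑ k ∈ range M, psi M N (M - 1 - k) := Finset.sum_add_distrib
    _ = 2 * ∑ k ∈ range M, psi M N k := by
        rw [Finset.sum_range_reflect (fun k => psi M N k) M]
        ring
    _ ≤ 2 * (2*(N:ℝ) + (M:ℝ)^2/(N:ℝ)) := by
        have := sum_psi_le M N hM hN
        linarith
    _ = 4*(N:ℝ) + 2*(M:ℝ)^2/(N:ℝ) := by ring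

lemma Gk_le_phiB {M N : ℕ} (hM : 1 ≤ M) (hN : 1 ≤ N) (u : ℝ) :
    Gk N u ≤ phiB M N (⌊Int.fract u * M⌋₊) := by
  set k := ⌊Int.fract u * M⌋₊ with hk
  have hfr0 : 0 ≤ Int.fract u := Int.fract_nonneg u
  have hfr1 : Int.fract u < 1 := Int.fract_lt_one u
  have hkl : (k:ℝ) ≤ Int.fract u * M := Nat.floor_le (by positivity)
  have hku : Int.fract u * M < (k:ℝ) + 1 := Nat.lt_floor_add_one _
  have hkM : k < M := by
    rw [hk]
    apply Nat.floor_lt (by positivity) |>.2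
    calc Int.fract u * M < 1 * M := by
          apply mul_lt_mul_of_pos_right hfr1
          exact_mod_cast hM
      _ = (M:ℝ) := one_mul _
  rw [phiB]
  set m := min k (M - 1 - k) with hm
  rcases Nat.eq_zero_or_pos m with h0 | hpos
  · rw [h0, psi, if_pos rfl]
    rw [Gk]
    have h2 := normSq_DD_le_sq N u
    have hN' : (0:ℝ) < N := by exact_mod_cast hN
    rw [div_mul_eq_mul_div, mul_comm]
    rw [div_le_iff₀ hN']
    nlinarith
  · -- m ≥ 1 : dZ u ≥ m / M
    have hmk : m ≤ k := Nat.min_le_left _ _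
    have hmk2 : m ≤ M - 1 - k := Nat.min_le_right _ _
    have hM' : (0:ℝ) < M := by exact_mod_cast hM
    have hm' : (0:ℝ) < m := by exact_mod_cast hpos
    have hcast : (m:ℝ) + k + 1 ≤ (M:ℝ) := by
      have : m + k + 1 ≤ M := by omega
      exact_mod_cast this
    have hdz : (m:ℝ)/(M:ℝ) ≤ dZ u := by
      rw [dZ_eq_min]
      apply le_min
      · rw [div_le_iff₀ hM']
        calc (m:ℝ) ≤ (k:ℝ) := by exact_mod_cast hmk
          _ ≤ Int.fract u * M := hkl
      · rw [div_le_iff₀ hM']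
        nlinarith
    have hdzpos : 0 < dZ u := lt_of_lt_of_le (by positivity) hdz
    have h2 := normSq_DD_le_inv (N := N) hdzpos
    have h3 : 1 / (4 * dZ u ^ 2) ≤ (M:ℝ)^2/(4*(m:ℝ)^2) := by
      rw [div_le_div_iff₀ (by positivity) (by positivity)]
      have h4 : ((m:ℝ)/(M:ℝ))^2 ≤ dZ u ^ 2 := pow_le_pow_left₀ (by positivity) hdz 2
      rw [div_pow] at h4
      have h5 := mul_le_mul_of_nonneg_left h4 (sq_nonneg (M:ℝ))
      have h6 : (M:ℝ)^2 * ((m:ℝ)^2/(M:ℝ)^2) = (m:ℝ)^2 := by field_simp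
      linarith
    have hpsi : psi M N m = (M:ℝ)^2/(2*(N:ℝ)*((m:ℝ))^2) := by
      rw [psi, if_neg (by omega)]
    rw [hpsi, Gk]
    have hN' : (0:ℝ) < N := by exact_mod_cast hN
    calc 2/(N:ℝ) * Complex.normSq (DD N u) ≤ 2/(N:ℝ) * (1 / (4 * dZ u ^ 2)) := by
          apply mul_le_mul_of_nonneg_left h2 (by positivity)
      _ ≤ 2/(N:ℝ) * ((M:ℝ)^2/(4*(m:ℝ)^2)) := by
          apply mul_le_mul_of_nonneg_left h3 (by positivity)
      _ = (M:ℝ)^2/(2*(N:ℝ)*((m:ℝ))^2) := by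
          field_simp
          ring

lemma count_bound {g : ℕ} (M : ℕ) (hM : 1 ≤ M) (N : Fin g → ℕ) (hN : ∀ i, 1 ≤ N i)
    {ι : Type*} [DecidableEq ι] (K : Finset ι) (Δ : ι → Fin g → ℝ)
    (hsp : ∀ t ∈ K, ∀ t' ∈ K, t ≠ t' → ∃ i, 1/(M:ℝ) ≤ dZ (Δ t i - Δ t' i)) :
    ∑ t ∈ K, ∏ i, Gk (N i) (Δ t i) ≤ ∏ i, (4*((N i):ℝ) + 2*(M:ℝ)^2/((N i):ℝ)) := by
  classical
  set key : ι → (Fin g → ℕ) := fun t i => ⌊Int.fract (Δ t i) * M⌋₊ with hkey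
  have hM' : (0:ℝ) < M := by exact_mod_cast hM
  have hkeyM : ∀ t i, key t i < M := by
    intro t i
    apply Nat.floor_lt (mul_nonneg (Int.fract_nonneg _) hM'.le) |>.2
    calc Int.fract (Δ t i) * M < 1 * M :=
          mul_lt_mul_of_pos_right (Int.fract_lt_one _) hM'
      _ = (M:ℝ) := one_mul _
  have hinj : ∀ t ∈ K, ∀ t' ∈ K, key t = key t' → t = t' := by
    intro t ht t' ht' hkeq
    by_contra hne
    obtain ⟨i, hi⟩ := hsp t ht t' ht' hne
    have hk : key t i = key t' i := by rw [hkeq]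
    set x := Int.fract (Δ t i) with hx
    set x' := Int.fract (Δ t' i) with hx'
    have hx0 : 0 ≤ x := Int.fract_nonneg _
    have hx0' : 0 ≤ x' := Int.fract_nonneg _
    have h1 : (key t i : ℝ) ≤ x * M := Nat.floor_le (by positivity)
    have h2 : x * M < (key t i : ℝ) + 1 := Nat.lt_floor_add_one _
    have h1' : (key t i : ℝ) ≤ x' * M := by rw [hk]; exact Nat.floor_le (by positivity)
    have h2' : x' * M < (key t i : ℝ) + 1 := by rw [hk]; exact Nat.lt_floor_add_one _
    have h3 : |x - x'| < 1/(M:ℝ) := by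
      rw [lt_div_iff₀ hM']
      have hd : |x*M - x'*M| < 1 := abs_lt.2 ⟨by linarith, by linarith⟩
      calc |x - x'| * M = |(x - x')*M| := by
            rw [abs_mul, _root_.abs_of_nonneg hM'.le]
        _ = |x*M - x'*M| := by ring_nf
        _ < 1 := hd
    have h4 := dZ_sub_le (Δ t i) (Δ t' i)
    rw [← hx, ← hx'] at h4
    linarith
  have hstep1 : ∀ t ∈ K, ∏ i, Gk (N i) (Δ t i) ≤ ∏ i, phiB M (N i) (key t i) := by
    intro t _
    apply Finset.prod_le_prod (fun i _ => Gk_nonneg _ _)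
    intro i _
    exact Gk_le_phiB hM (hN i) (Δ t i)
  calc ∑ t ∈ K, ∏ i, Gk (N i) (Δ t i) ≤ ∑ t ∈ K, ∏ i, phiB M (N i) (key t i) :=
        Finset.sum_le_sum hstep1
    _ = ∑ κ ∈ K.image key, ∏ i, phiB M (N i) (κ i) :=
        (Finset.sum_image (f := fun κ => ∏ i, phiB M (N i) (κ i)) hinj).symm
    _ ≤ ∑ κ ∈ Fintype.piFinset (fun _ : Fin g => range M), ∏ i, phiB M (N i) (κ i) := by
        apply Finset.sum_le_sum_of_subset_of_nonneg
        · intro κ hκ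
          rw [Finset.mem_image] at hκ
          obtain ⟨t, _, rfl⟩ := hκ
          rw [Fintype.mem_piFinset]
          intro i
          rw [Finset.mem_range]
          exact hkeyM t i
        · intro κ _ _
          exact Finset.prod_nonneg (fun i _ => psi_nonneg _ _ _)
    _ = ∏ i, ∑ k ∈ range M, phiB M (N i) k := (Finset.prod_univ_sum _ _).symm
    _ ≤ ∏ i, (4*((N i):ℝ) + 2*(M:ℝ)^2/((N i):ℝ)) := by
        apply Finset.prod_le_prod
        · intro i _
          exact Finset.sum_nonneg (fun k _ => psi_nonneg _ _ _)
        · intro i _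
          exact sum_phiB_le M (N i) hM (hN i)

lemma Gk_even (N : ℕ) (u : ℝ) : Gk N (-u) = Gk N u := by rw [Gk, Gk, normSq_DD_neg]

lemma core_sieve {g : ℕ} (M : ℕ) (hM : 1 ≤ M) (N : Fin g → ℕ) (hN2M : ∀ i, 2*M ≤ N i)
    {ι : Type*} [DecidableEq ι] (K : Finset ι) (θ : ι → Fin g → ℝ)
    (hsp : ∀ s ∈ K, ∀ t ∈ K, s ≠ t → ∃ i, 1/(M:ℝ) ≤ dZ (θ s i - θ t i))
    (b : ι → ℂ) (R : Finset (Fin g → ℤ)) (hR : ∀ a ∈ R, ∀ i, 2 * |a i| ≤ (N i : ℤ)) :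
    ∑ a ∈ R, Complex.normSq (∑ s ∈ K, b s * ee (∑ i, (a i : ℝ) * θ s i))
      ≤ (∏ i, (4*((N i):ℝ) + 2*(M:ℝ)^2/((N i):ℝ))) * ∑ s ∈ K, Complex.normSq (b s) := by
  classical
  have hN1 : ∀ i, 1 ≤ N i := fun i => le_trans (by omega) (hN2M i)
  set T : (Fin g → ℤ) → ℂ := fun a => ∑ s ∈ K, b s * ee (∑ i, (a i : ℝ) * θ s i) with hT
  set W : (Fin g → ℤ) → ℝ := fun a => ∏ i, 2/((N i):ℝ) * ((wN (N i) (a i) : ℕ) : ℝ) with hW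
  set Box : Finset (Fin g → ℤ) := Fintype.piFinset (fun i => Finset.Ioo (-(N i:ℤ)) ((N i : ℤ))) with hBox
  have hWnonneg : ∀ a, 0 ≤ W a := by
    intro a
    apply Finset.prod_nonneg
    intro i _
    positivity
  have hRBox : R ⊆ Box := by
    intro a ha
    rw [hBox, Fintype.mem_piFinset]
    intro i
    have := hR a ha i
    rw [Finset.mem_Ioo]
    have h1 : (1:ℤ) ≤ N i := by exact_mod_cast hN1 i
    rcases abs_le.1 (by omega : |a i| ≤ (N i:ℤ) - 1) with ⟨h2, h3⟩
    omega
  have hW1 : ∀ a ∈ R, 1 ≤ W a := by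
    intro a ha
    show (1:ℝ) ≤ ∏ i, 2/((N i):ℝ) * ((wN (N i) (a i) : ℕ) : ℝ)
    have hone : (1:ℝ) = ∏ _i : Fin g, (1:ℝ) := by simp
    rw [hone]
    apply Finset.prod_le_prod (fun i _ => zero_le_one)
    intro i _
    have h1 := hR a ha i
    rw [Int.abs_eq_natAbs] at h1
    have h4 : 2 * (a i).natAbs ≤ N i := by exact_mod_cast h1
    have h2 : (a i).natAbs < N i := by
      have := hN1 i
      omega
    have h3 := wN_ge h2
    have h5 : (N i : ℝ) ≤ 2 * ((N i - (a i).natAbs : ℕ) : ℝ) := by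
      have : N i ≤ 2 * (N i - (a i).natAbs) := by omega
      exact_mod_cast this
    have h6 : ((N i - (a i).natAbs : ℕ) : ℝ) ≤ ((wN (N i) (a i) : ℕ) : ℝ) := by exact_mod_cast h3
    have hNpos : (0:ℝ) < N i := by exact_mod_cast hN1 i
    rw [div_mul_eq_mul_div, le_div_iff₀ hNpos]
    linarith
  -- step 1 : pass to weighted sum over Box
  have step1 : ∑ a ∈ R, Complex.normSq (T a) ≤ ∑ a ∈ Box, W a * Complex.normSq (T a) := by
    calc ∑ a ∈ R, Complex.normSq (T a) ≤ ∑ a ∈ R, W a * Complex.normSq (T a) := by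
          apply Finset.sum_le_sum
          intro a ha
          have := hW1 a ha
          nlinarith [Complex.normSq_nonneg (T a)]
      _ ≤ ∑ a ∈ Box, W a * Complex.normSq (T a) := by
          apply Finset.sum_le_sum_of_subset_of_nonneg hRBox
          intro a _ _
          exact mul_nonneg (hWnonneg a) (Complex.normSq_nonneg _)
  -- step 2 : the identity
  have inner_id : ∀ s ∈ K, ∀ t ∈ K,
      ∑ a ∈ Box, ((W a : ℝ) : ℂ) * ee (∑ i, (a i : ℝ) * (θ s i - θ t i))
        = ((∏ i, Gk (N i) (θ s i - θ t i) : ℝ) : ℂ) := by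
    intro s _ t _
    set Δ : Fin g → ℝ := fun i => θ s i - θ t i with hΔ
    have h1 : ∀ a : Fin g → ℤ, ((W a : ℝ) : ℂ) * ee (∑ i, (a i : ℝ) * Δ i)
        = ∏ i, (((2:ℝ)/((N i):ℝ) : ℝ) : ℂ) * (((wN (N i) (a i) : ℕ) : ℝ) : ℂ) * ee ((a i : ℝ) * Δ i) := by
      intro a
      have hWa : ((W a : ℝ) : ℂ) = ∏ i, ((((2:ℝ)/((N i):ℝ) : ℝ) : ℂ) * (((wN (N i) (a i) : ℕ) : ℝ) : ℂ)) := by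
        show ((∏ i, (2:ℝ)/((N i):ℝ) * ((wN (N i) (a i) : ℕ) : ℝ) : ℝ) : ℂ) = _
        push_cast
        rfl
      rw [hWa, ee_sum Finset.univ (fun i => (a i : ℝ) * Δ i), ← Finset.prod_mul_distrib]
    rw [Finset.sum_congr rfl (fun a _ => h1 a)]
    have h3 := Finset.prod_univ_sum (fun i => Finset.Ioo (-(N i:ℤ)) ((N i:ℤ)))
      (fun i n => (((2:ℝ)/((N i):ℝ) : ℝ) : ℂ) * (((wN (N i) n : ℕ) : ℝ) : ℂ) * ee ((n : ℝ) * Δ i))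
    rw [hBox, ← h3]
    have h2 : ∀ i : Fin g, ∑ n ∈ Finset.Ioo (-(N i:ℤ)) ((N i:ℤ)),
        (((2:ℝ)/((N i):ℝ) : ℝ) : ℂ) * (((wN (N i) n : ℕ) : ℝ) : ℂ) * ee ((n : ℝ) * Δ i)
          = ((Gk (N i) (Δ i) : ℝ) : ℂ) := by
      intro i
      have hpull : ∀ n : ℤ, (((2:ℝ)/((N i):ℝ) : ℝ) : ℂ) * (((wN (N i) n : ℕ) : ℝ) : ℂ) * ee ((n : ℝ) * Δ i)
          = (((2:ℝ)/((N i):ℝ) : ℝ) : ℂ) * (((wN (N i) n : ℕ) : ℂ)  * ee ((n : ℝ) * Δ i)) := by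
        intro n
        push_cast
        ring
      rw [Finset.sum_congr rfl (fun n _ => hpull n), ← Finset.mul_sum, kernel_identity (N i) (Δ i)]
      rw [Gk]
      push_cast
      ring
    rw [Finset.prod_congr rfl (fun i _ => h2 i)]
    push_cast
    rfl
  have identity : ((∑ a ∈ Box, W a * Complex.normSq (T a) : ℝ) : ℂ)
      = ∑ s ∈ K, ∑ t ∈ K, (b s * (starRingEnd ℂ) (b t)) * ((∏ i, Gk (N i) (θ s i - θ t i) : ℝ) : ℂ) := by
    have start : ((∑ a ∈ Box, W a * Complex.normSq (T a) : ℝ) : ℂ)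
        = ∑ a ∈ Box, ((W a : ℝ):ℂ) * ((Complex.normSq (T a) : ℝ) : ℂ) := by
      push_cast
      rfl
    rw [start]
    have hTc : ∀ a : Fin g → ℤ, ((Complex.normSq (T a) : ℝ) : ℂ) = T a * (starRingEnd ℂ) (T a) :=
      fun a => (Complex.mul_conj _).symm
    calc ∑ a ∈ Box, ((W a : ℝ):ℂ) * ((Complex.normSq (T a) : ℝ) : ℂ)
        = ∑ a ∈ Box, ((W a : ℝ):ℂ) * (T a * (starRingEnd ℂ) (T a)) := by
          apply Finset.sum_congr rfl
          intro a _
          rw [hTc a]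
      _ = ∑ a ∈ Box, ∑ s ∈ K, ∑ t ∈ K, (b s * (starRingEnd ℂ) (b t)) *
            (((W a : ℝ):ℂ) * ee (∑ i, (a i : ℝ) * (θ s i - θ t i))) := by
          apply Finset.sum_congr rfl
          intro a _
          rw [hT]
          simp only [map_sum, map_mul, conj_ee]
          rw [Finset.sum_mul_sum]
          rw [Finset.mul_sum]
          apply Finset.sum_congr rfl
          intro s _
          rw [Finset.mul_sum]
          apply Finset.sum_congr rfl
          intro t _
          have : ee (∑ i, (a i : ℝ) * θ s i) * ee (-∑ i, (a i : ℝ) * θ t i)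
              = ee (∑ i, (a i : ℝ) * (θ s i - θ t i)) := by
            rw [← ee_add]
            congr 1
            rw [← Finset.sum_neg_distrib, ← Finset.sum_add_distrib]
            apply Finset.sum_congr rfl
            intro i _
            ring
          rw [← this]
          ring
      _ = ∑ s ∈ K, ∑ t ∈ K, (b s * (starRingEnd ℂ) (b t)) *
            (∑ a ∈ Box, ((W a : ℝ):ℂ) * ee (∑ i, (a i : ℝ) * (θ s i - θ t i))) := by
          rw [Finset.sum_comm]
          apply Finset.sum_congr rfl
          intro s _
          rw [Finset.sum_comm]
          apply Finset.sum_congr rfl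
          intro t _
          rw [Finset.mul_sum]
      _ = ∑ s ∈ K, ∑ t ∈ K, (b s * (starRingEnd ℂ) (b t)) * ((∏ i, Gk (N i) (θ s i - θ t i) : ℝ) : ℂ) := by
          apply Finset.sum_congr rfl
          intro s hs
          apply Finset.sum_congr rfl
          intro t ht
          rw [inner_id s hs t ht]
  -- step 3 : bound
  have hGprod_nonneg : ∀ s t : ι, 0 ≤ ∏ i, Gk (N i) (θ s i - θ t i) :=
    fun s t => Finset.prod_nonneg (fun i _ => Gk_nonneg _ _)
  have hsym : ∀ s t : ι, ∏ i, Gk (N i) (θ s i - θ t i) = ∏ i, Gk (N i) (θ t i - θ s i) := by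
    intro s t
    apply Finset.prod_congr rfl
    intro i _
    rw [show θ s i - θ t i = -(θ t i - θ s i) by ring, Gk_even]
  have hL0 : 0 ≤ ∑ a ∈ Box, W a * Complex.normSq (T a) :=
    Finset.sum_nonneg (fun a _ => mul_nonneg (hWnonneg a) (Complex.normSq_nonneg _))
  have habs : ∑ a ∈ Box, W a * Complex.normSq (T a)
      ≤ ∑ s ∈ K, ∑ t ∈ K, Complex.abs (b s) * Complex.abs (b t) * (∏ i, Gk (N i) (θ s i - θ t i)) := by
    calc ∑ a ∈ Box, W a * Complex.normSq (T a)
        = Complex.abs ((( ∑ a ∈ Box, W a * Complex.normSq (T a) : ℝ)) : ℂ) := by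
          rw [Complex.abs_ofReal, _root_.abs_of_nonneg hL0]
      _ = Complex.abs (∑ s ∈ K, ∑ t ∈ K, (b s * (starRingEnd ℂ) (b t)) * ((∏ i, Gk (N i) (θ s i - θ t i) : ℝ) : ℂ)) := by
          rw [identity]
      _ ≤ ∑ s ∈ K, Complex.abs (∑ t ∈ K, (b s * (starRingEnd ℂ) (b t)) * ((∏ i, Gk (N i) (θ s i - θ t i) : ℝ) : ℂ)) :=
          Complex.abs.sum_le _ _
      _ ≤ ∑ s ∈ K, ∑ t ∈ K, Complex.abs ((b s * (starRingEnd ℂ) (b t)) * ((∏ i, Gk (N i) (θ s i - θ t i) : ℝ) : ℂ)) :=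
          Finset.sum_le_sum (fun s _ => Complex.abs.sum_le _ _)
      _ = ∑ s ∈ K, ∑ t ∈ K, Complex.abs (b s) * Complex.abs (b t) * (∏ i, Gk (N i) (θ s i - θ t i)) := by
          apply Finset.sum_congr rfl
          intro s _
          apply Finset.sum_congr rfl
          intro t _
          rw [map_mul, map_mul, Complex.abs_conj, Complex.abs_ofReal,
            _root_.abs_of_nonneg (hGprod_nonneg s t)]
  have hamgm : ∑ s ∈ K, ∑ t ∈ K, Complex.abs (b s) * Complex.abs (b t) * (∏ i, Gk (N i) (θ s i - θ t i))
      ≤ ∑ s ∈ K, Complex.normSq (b s) * (∑ t ∈ K, ∏ i, Gk (N i) (θ s i - θ t i)) := by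
    have hterm : ∀ s t : ι, Complex.abs (b s) * Complex.abs (b t) * (∏ i, Gk (N i) (θ s i - θ t i))
        ≤ (Complex.normSq (b s) + Complex.normSq (b t))/2 * (∏ i, Gk (N i) (θ s i - θ t i)) := by
      intro s t
      apply mul_le_mul_of_nonneg_right ?_ (hGprod_nonneg s t)
      rw [← Complex.sq_abs, ← Complex.sq_abs]
      nlinarith [sq_nonneg (Complex.abs (b s) - Complex.abs (b t))]
    set G : ι → ι → ℝ := fun s t => ∏ i, Gk (N i) (θ s i - θ t i) with hG
    have h12 : ∑ s ∈ K, ∑ t ∈ K, Complex.normSq (b t) * G s t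
        = ∑ s ∈ K, ∑ t ∈ K, Complex.normSq (b s) * G s t := by
      rw [Finset.sum_comm]
      apply Finset.sum_congr rfl
      intro s _
      apply Finset.sum_congr rfl
      intro t _
      congr 1
      first
      | exact hsym s t
      | exact (hsym s t).symm
      | exact hsym t s
      | exact (hsym t s).symm
    calc ∑ s ∈ K, ∑ t ∈ K, Complex.abs (b s) * Complex.abs (b t) * G s t
        ≤ ∑ s ∈ K, ∑ t ∈ K, (Complex.normSq (b s) + Complex.normSq (b t))/2 * G s t :=
          Finset.sum_le_sum (fun s _ => Finset.sum_le_sum (fun t _ => hterm s t))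
      _ = ∑ s ∈ K, ∑ t ∈ K, ((Complex.normSq (b s) * G s t)/2 + (Complex.normSq (b t) * G s t)/2) := by
          apply Finset.sum_congr rfl
          intro s _
          apply Finset.sum_congr rfl
          intro t _
          ring
      _ = ∑ s ∈ K, (∑ t ∈ K, (Complex.normSq (b s) * G s t)/2) + ∑ s ∈ K, (∑ t ∈ K, (Complex.normSq (b t) * G s t)/2) := by
          rw [← Finset.sum_add_distrib]
          apply Finset.sum_congr rfl
          intro s _
          rw [← Finset.sum_add_distrib]
      _ = (∑ s ∈ K, ∑ t ∈ K, Complex.normSq (b s) * G s t)/2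
          + (∑ s ∈ K, ∑ t ∈ K, Complex.normSq (b t) * G s t)/2 := by
          simp only [← Finset.sum_div]
      _ = ∑ s ∈ K, ∑ t ∈ K, Complex.normSq (b s) * G s t := by
          rw [h12, add_halves]
      _ = ∑ s ∈ K, Complex.normSq (b s) * (∑ t ∈ K, G s t) := by
          apply Finset.sum_congr rfl
          intro s _
          rw [Finset.mul_sum]
  have hcount : ∀ s ∈ K, ∑ t ∈ K, ∏ i, Gk (N i) (θ s i - θ t i)
      ≤ ∏ i, (4*((N i):ℝ) + 2*(M:ℝ)^2/((N i):ℝ)) := by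
    intro s hs
    have heq : ∀ t : ι, (∏ i, Gk (N i) (θ s i - θ t i)) = ∏ i, Gk (N i) ((θ t i - θ s i) - 0) := by
      intro t
      rw [hsym s t]
      apply Finset.prod_congr rfl
      intro i _
      norm_num
    rw [Finset.sum_congr rfl (fun t _ => heq t)]
    apply count_bound M hM N hN1 K (fun t i => (θ t i - θ s i) - 0)
    intro t ht t' ht' hne
    obtain ⟨i, hi⟩ := hsp t ht t' ht' hne
    exact ⟨i, by rw [show (θ t i - θ s i - 0) - (θ t' i - θ s i - 0) = θ t i - θ t' i by ring]; exact hi⟩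
  calc ∑ a ∈ R, Complex.normSq (T a) ≤ ∑ a ∈ Box, W a * Complex.normSq (T a) := step1
    _ ≤ ∑ s ∈ K, ∑ t ∈ K, Complex.abs (b s) * Complex.abs (b t) * (∏ i, Gk (N i) (θ s i - θ t i)) := habs
    _ ≤ ∑ s ∈ K, Complex.normSq (b s) * (∑ t ∈ K, ∏ i, Gk (N i) (θ s i - θ t i)) := hamgm
    _ ≤ ∑ s ∈ K, Complex.normSq (b s) * (∏ i, (4*((N i):ℝ) + 2*(M:ℝ)^2/((N i):ℝ))) := by
        apply Finset.sum_le_sum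
        intro s hs
        exact mul_le_mul_of_nonneg_left (hcount s hs) (Complex.normSq_nonneg _)
    _ = (∏ i, (4*((N i):ℝ) + 2*(M:ℝ)^2/((N i):ℝ))) * ∑ s ∈ K, Complex.normSq (b s) := by
        rw [← Finset.sum_mul]
        ring

lemma orth1 {p : ℕ} [NeZero p] (hp : 0 < p) (b : ℤ) :
    ∑ x : ZMod p, ee ((b : ℝ) * ((x.val : ℕ) : ℝ) / p) = if (b : ZMod p) = 0 then (p:ℂ) else 0 := by
  have hreindex : ∑ x : ZMod p, ee ((b : ℝ) * ((x.val : ℕ) : ℝ) / p)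
      = ∑ j ∈ range p, ee ((b : ℝ) * (j : ℝ) / p) := by
    apply Finset.sum_nbij' (i := fun x : ZMod p => x.val) (j := fun j : ℕ => (j : ZMod p))
    · intro x _
      exact Finset.mem_range.2 (ZMod.val_lt x)
    · intro j _
      exact Finset.mem_univ _
    · intro x _
      exact ZMod.natCast_rightInverse x
    · intro j hj
      exact ZMod.val_cast_of_lt (Finset.mem_range.1 hj)
    · intro x _
      rfl
  rw [hreindex]
  have hterm : ∀ j : ℕ, ee ((b : ℝ) * (j : ℝ) / p) = (ee ((b:ℝ)/p))^j := by
    intro j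
    rw [← ee_nat_mul]
    congr 1
    ring
  rw [Finset.sum_congr rfl (fun j _ => hterm j)]
  by_cases hdvd : (b : ZMod p) = 0
  · rw [if_pos hdvd]
    obtain ⟨c, hc⟩ := (ZMod.intCast_zmod_eq_zero_iff_dvd b p).1 hdvd
    have : ee ((b:ℝ)/p) = 1 := by
      rw [hc]
      have : ((p * c : ℤ) : ℝ)/p = (c : ℝ) := by
        push_cast
        field_simp
      rw [this, ← ee_int c]
    rw [Finset.sum_congr rfl (fun j _ => by rw [this, one_pow])]
    simp
  · rw [if_neg hdvd]
    have hne : ee ((b:ℝ)/p) ≠ 1 := by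
      intro hc
      obtain ⟨n, hn⟩ := ee_eq_one_iff.1 hc
      apply hdvd
      apply (ZMod.intCast_zmod_eq_zero_iff_dvd b p).2
      refine ⟨n, ?_⟩
      have hp' : (0:ℝ) < p := by exact_mod_cast hp
      have : (b:ℝ) = p * n := by
        field_simp at hn
        linarith [hn]
      exact_mod_cast this
    rw [geom_sum_eq hne p]
    have : (ee ((b:ℝ)/p))^p = 1 := by
      rw [← ee_nat_mul]
      have : (p:ℝ) * ((b:ℝ)/p) = (b:ℝ) := by
        field_simp
      rw [this, ← ee_int b]
    rw [this]
    simp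

noncomputable def ipf (g p : ℕ) (x : Fin g → ℤ) (h : Fin g → ZMod p) : ℝ :=
  (∑ i, (x i : ℝ) * ((h i).val : ℝ)) / p

noncomputable def Sg (g p : ℕ) (Op : Finset (Fin g → ZMod p)) (h : Fin g → ZMod p) : ℂ :=
  ∑ w ∈ Op, ee (-(ipf g p (fun i => ((w i).val : ℤ)) h))

lemma ipf_zero (g p : ℕ) [NeZero p] (x : Fin g → ℤ) : ipf g p x 0 = 0 := by
  rw [ipf]
  have : ∀ i : Fin g, (x i : ℝ) * ((((0:Fin g → ZMod p) i).val : ℕ) : ℝ) = 0 := by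
    intro i
    simp [ZMod.val_zero]
  rw [Finset.sum_congr rfl (fun i _ => this i)]
  simp

lemma orthg {g p : ℕ} [NeZero p] (hp : 0 < p) (b : Fin g → ℤ) :
    ∑ h : Fin g → ZMod p, ee (ipf g p b h)
      = if (∀ i, (b i : ZMod p) = 0) then ((p:ℂ))^g else 0 := by
  have h1 : ∀ h : Fin g → ZMod p, ee (ipf g p b h)
      = ∏ i, ee ((b i : ℝ) * (((h i).val : ℕ) : ℝ) / p) := by
    intro h
    rw [ipf, Finset.sum_div, ee_sum]
  rw [Finset.sum_congr rfl (fun h _ => h1 h)]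
  have h2 : ∑ h : Fin g → ZMod p, ∏ i, ee ((b i : ℝ) * (((h i).val : ℕ) : ℝ) / p)
      = ∏ i, ∑ x : ZMod p, ee ((b i : ℝ) * ((x.val : ℕ) : ℝ) / p) := by
    rw [Finset.prod_univ_sum]
    rw [← Fintype.piFinset_univ]
  rw [h2, Finset.prod_congr rfl (fun i _ => orth1 hp (b i))]
  by_cases hc : ∀ i, (b i : ZMod p) = 0
  · rw [if_pos hc, Finset.prod_congr rfl (fun i (_ : i ∈ Finset.univ) => if_pos (hc i)),
      Finset.prod_const, Finset.card_univ, Fintype.card_fin]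
  · rw [if_neg hc]
    push_neg at hc
    obtain ⟨i, hi⟩ := hc
    exact Finset.prod_eq_zero (Finset.mem_univ i) (if_neg hi)

lemma cond_equiv {g p : ℕ} [NeZero p] (a : Fin g → ℤ) (w : Fin g → ZMod p) :
    (∀ i, ((a i - ((w i).val : ℤ) : ℤ) : ZMod p) = 0) ↔ (fun i => ((a i : ZMod p))) = w := by
  rw [funext_iff]
  apply forall_congr'
  intro i
  rw [Int.cast_sub, Int.cast_natCast, ZMod.natCast_rightInverse, sub_eq_zero]

lemma key_sum {g p : ℕ} [NeZero p] (hp : 0 < p) (Op : Finset (Fin g → ZMod p)) (a : Fin g → ℤ) :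
    ∑ h : Fin g → ZMod p, Sg g p Op h * ee (ipf g p a h)
      = if (fun i => ((a i : ZMod p))) ∈ Op then ((p:ℂ))^g else 0 := by
  have h1 : ∀ h : Fin g → ZMod p, Sg g p Op h * ee (ipf g p a h)
      = ∑ w ∈ Op, ee (ipf g p (fun i => a i - ((w i).val : ℤ)) h) := by
    intro h
    rw [Sg, Finset.sum_mul]
    apply Finset.sum_congr rfl
    intro w _
    rw [← ee_add]
    congr 1
    rw [ipf, ipf, ipf, ← neg_div, ← add_div]
    congr 1
    rw [← Finset.sum_neg_distrib, ← Finset.sum_add_distrib]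
    apply Finset.sum_congr rfl
    intro i _
    push_cast
    ring
  rw [Finset.sum_congr rfl (fun h _ => h1 h), Finset.sum_comm]
  have h2 : ∀ w ∈ Op, ∑ h : Fin g → ZMod p, ee (ipf g p (fun i => a i - ((w i).val : ℤ)) h)
      = if (fun i => ((a i : ZMod p))) = w then ((p:ℂ))^g else 0 := by
    intro w _
    rw [orthg hp]
    congr 1
    · exact propext (cond_equiv a w)
  rw [Finset.sum_congr rfl h2]
  rw [Finset.sum_ite_eq Op (fun i => ((a i : ZMod p))) (fun _ => ((p:ℂ))^g)]

lemma expansionA {g p : ℕ} [NeZero p] (hp : 0 < p) (Op : Finset (Fin g → ZMod p)) (a : Fin g → ℤ) :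
    (((if (fun i => ((a i : ZMod p))) ∈ Op then (1:ℝ) else 0) - (Op.card : ℝ)/(p:ℝ)^g : ℝ) : ℂ)
      = ∑ h ∈ (Finset.univ.erase (0 : Fin g → ZMod p)),
          (Sg g p Op h / (p:ℂ)^g) * ee (ipf g p a h) := by
  have hpg : ((p:ℂ))^g ≠ 0 := by
    apply pow_ne_zero
    exact_mod_cast hp.ne'
  have hzero : Sg g p Op 0 * ee (ipf g p a 0) = (Op.card : ℂ) := by
    rw [ipf_zero, ee_zero, mul_one, Sg]
    have : ∀ w ∈ Op, ee (-(ipf g p (fun i => (((w i).val : ℕ) : ℤ)) 0)) = 1 := by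
      intro w _
      rw [ipf_zero, neg_zero, ee_zero]
    rw [Finset.sum_congr rfl this]
    simp
  have hsplit : Sg g p Op 0 * ee (ipf g p a 0)
      + ∑ h ∈ (Finset.univ.erase (0 : Fin g → ZMod p)), Sg g p Op h * ee (ipf g p a h)
      = ∑ h : Fin g → ZMod p, Sg g p Op h * ee (ipf g p a h) :=
    Finset.add_sum_erase Finset.univ (fun h => Sg g p Op h * ee (ipf g p a h)) (Finset.mem_univ (0 : Fin g → ZMod p))
  have key := key_sum hp Op a
  rw [← hsplit, hzero] at key
  have herase : ∑ h ∈ (Finset.univ.erase (0 : Fin g → ZMod p)), Sg g p Op h * ee (ipf g p a h)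
      = (if (fun i => ((a i : ZMod p))) ∈ Op then ((p:ℂ))^g else 0) - (Op.card : ℂ) := by
    rw [← key]
    ring
  have hdiv : ∑ h ∈ (Finset.univ.erase (0 : Fin g → ZMod p)),
      (Sg g p Op h / (p:ℂ)^g) * ee (ipf g p a h)
        = (∑ h ∈ (Finset.univ.erase (0 : Fin g → ZMod p)), Sg g p Op h * ee (ipf g p a h)) / (p:ℂ)^g := by
    rw [Finset.sum_div]
    apply Finset.sum_congr rfl
    intro h _
    ring
  rw [hdiv, herase, sub_div]
  have hL : (((if (fun i => ((a i : ZMod p))) ∈ Op then (1:ℝ) else 0) - (Op.card : ℝ)/(p:ℝ)^g : ℝ) : ℂ)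
      = (if (fun i => ((a i : ZMod p))) ∈ Op then (1:ℂ) else 0) - (Op.card : ℂ)/((p:ℂ))^g := by
    push_cast
    split <;> norm_num
  rw [hL]
  congr 1
  split
  · rw [div_self hpg]
  · rw [zero_div]

lemma parsevalB {g p : ℕ} [NeZero p] (hp : 0 < p) (Op : Finset (Fin g → ZMod p)) :
    ∑ h : Fin g → ZMod p, Complex.normSq (Sg g p Op h) = (p:ℝ)^g * Op.card := by
  have hC : ∑ h : Fin g → ZMod p, ((Complex.normSq (Sg g p Op h) : ℝ) : ℂ)
      = ((p:ℂ))^g * (Op.card : ℂ) := by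
    have h1 : ∀ h : Fin g → ZMod p, ((Complex.normSq (Sg g p Op h) : ℝ) : ℂ)
        = ∑ w ∈ Op, ∑ w' ∈ Op, ee (ipf g p (fun i => (((w' i).val : ℤ)) - (((w i).val : ℤ))) h) := by
      intro h
      rw [← Complex.mul_conj]
      rw [Sg, map_sum, Finset.sum_mul_sum]
      apply Finset.sum_congr rfl
      intro w _
      apply Finset.sum_congr rfl
      intro w' _
      rw [conj_ee, neg_neg, ← ee_add]
      congr 1
      rw [ipf, ipf, ipf, ← neg_div, ← add_div]
      congr 1
      rw [← Finset.sum_neg_distrib, ← Finset.sum_add_distrib]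
      apply Finset.sum_congr rfl
      intro i _
      push_cast
      ring
    rw [Finset.sum_congr rfl (fun h _ => h1 h), Finset.sum_comm]
    have h2 : ∀ w ∈ Op, ∑ h : Fin g → ZMod p, ∑ w' ∈ Op,
        ee (ipf g p (fun i => (((w' i).val : ℤ)) - (((w i).val : ℤ))) h)
        = ((p:ℂ))^g := by
      intro w hw
      rw [Finset.sum_comm]
      have h3 : ∀ w' ∈ Op, ∑ h : Fin g → ZMod p,
          ee (ipf g p (fun i => (((w' i).val : ℤ)) - (((w i).val : ℤ))) h)
          = if w' = w then ((p:ℂ))^g else 0 := by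
        intro w' _
        rw [orthg hp]
        congr 1
        apply propext
        have hconv : ∀ i, (((((w' i).val : ℤ)) - (((w i).val : ℤ)) : ℤ) : ZMod p) = w' i - w i := by
          intro i
          push_cast
          rw [ZMod.natCast_rightInverse, ZMod.natCast_rightInverse]
        constructor
        · intro hall
          funext i
          have h5 := hall i
          rw [hconv i] at h5
          exact sub_eq_zero.1 h5
        · intro heq i
          rw [hconv i, heq]
          simp
      rw [Finset.sum_congr rfl h3, Finset.sum_ite_eq' Op w (fun _ => ((p:ℂ))^g), if_pos hw]
    rw [Finset.sum_congr rfl h2, Finset.sum_const, nsmul_eq_mul]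
    ring
  have := hC
  rw [← Complex.ofReal_sum] at this
  have h4 : ((p:ℂ))^g * (Op.card : ℂ) = (((p:ℝ)^g * Op.card : ℝ) : ℂ) := by
    push_cast
    ring
  rw [h4] at this
  exact_mod_cast this

noncomputable def freqs (g p : ℕ) : Finset (Fin g → ZMod p) :=
  if h : 0 < p then (letI : NeZero p := ⟨h.ne'⟩; Finset.univ.erase 0) else ∅

lemma freqs_eq (g p : ℕ) [NeZero p] :
    freqs g p = Finset.univ.erase 0 := by
  rw [freqs, dif_pos (Nat.pos_of_ne_zero (NeZero.ne p))]

noncomputable def thf {g : ℕ} (s : (p : ℕ) × (Fin g → ZMod p)) (i : Fin g) : ℝ :=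
  ((s.2 i).val : ℝ) / s.1

lemma spacing {g : ℕ} (PP : Finset ℕ) (hPP : ∀ p ∈ PP, p.Prime) (M : ℕ)
    (hM : ∀ p ∈ PP, ∀ q ∈ PP, p * q ≤ M) :
    ∀ s ∈ PP.sigma (fun p => freqs g p), ∀ t ∈ PP.sigma (fun p => freqs g p), s ≠ t →
      ∃ i, 1/(M:ℝ) ≤ dZ (thf s i - thf t i) := by
  rintro ⟨p, h⟩ hs ⟨q, h'⟩ ht hne
  rw [Finset.mem_sigma] at hs ht
  obtain ⟨hpP, hh⟩ := hs
  obtain ⟨hqP, hh'⟩ := ht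
  have hp := hPP p hpP
  have hq := hPP q hqP
  haveI : NeZero p := ⟨hp.ne_zero⟩
  haveI : NeZero q := ⟨hq.ne_zero⟩
  have hp0 : 0 < p := hp.pos
  have hq0 : 0 < q := hq.pos
  have hpqM : p * q ≤ M := hM p hpP q hqP
  have hM0 : 0 < M := lt_of_lt_of_le (by positivity) hpqM
  rw [freqs_eq] at hh hh'
  have hh0 : h ≠ 0 := (Finset.mem_erase.1 hh).1
  by_cases hpq : p = q
  · subst hpq
    have hne' : h ≠ h' := by
      intro hc
      exact hne (by rw [hc])
    obtain ⟨i, hi⟩ : ∃ i, h i ≠ h' i := by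
      by_contra hc
      push_neg at hc
      exact hne' (funext hc)
    refine ⟨i, ?_⟩
    have hdiff : thf (⟨p, h⟩ : (p : ℕ) × (Fin g → ZMod p)) i - thf ⟨p, h'⟩ i
        = (((h i).val - ((h' i).val) : ℤ) : ℝ) / p := by
      rw [thf, thf]
      push_cast
      ring
    rw [hdiff]
    have hnd : ¬ ((p:ℤ) ∣ ((h i).val - ((h' i).val) : ℤ)) := by
      intro hdvd
      have hlt1 : (h i).val < p := ZMod.val_lt _
      have hlt2 : (h' i).val < p := ZMod.val_lt _
      have hz : ((h i).val - ((h' i).val) : ℤ) = 0 := by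
        rcases hdvd with ⟨c, hc⟩
        have hb : -1 < c ∧ c < 1 := by constructor <;> nlinarith [hc]
        have hc0 : c = 0 := by omega
        rw [hc0, mul_zero] at hc
        exact hc
      have : (h i).val = (h' i).val := by omega
      exact hi (by
        have e1 := ZMod.natCast_rightInverse (n := p) (h i)
        have e2 := ZMod.natCast_rightInverse (n := p) (h' i)
        rw [← e1, ← e2, this])
    have h1 := dZ_int_div hp0 hnd
    have h2 : 1/(M:ℝ) ≤ 1/(p:ℝ) := by
      apply one_div_le_one_div_of_le (by exact_mod_cast hp0)
      have : p ≤ M := le_trans (Nat.le_mul_of_pos_right p hq0) hpqM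
      exact_mod_cast this
    linarith
  · -- distinct primes
    obtain ⟨i, hi⟩ : ∃ i, ¬ (((p*q : ℕ)):ℤ) ∣ (((h i).val : ℤ) * q - ((h' i).val : ℤ) * p) := by
      by_contra hc
      push_neg at hc
      apply hh0
      funext i
      have hdvd := hc i
      have hpdvd : (p:ℤ) ∣ (((h i).val : ℤ) * q - ((h' i).val : ℤ) * p) := by
        refine dvd_trans ?_ hdvd
        exact_mod_cast Dvd.intro q rfl
      have hpv : (p:ℤ) ∣ ((h i).val : ℤ) * q := by
        have hd2 : (p:ℤ) ∣ (((h' i).val : ℤ) * p) := ⟨((h' i).val : ℤ), by ring⟩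
        have heq : ((h i).val : ℤ) * q
            = (((h i).val : ℤ) * q - ((h' i).val : ℤ) * p) + (((h' i).val : ℤ) * p) := by ring
        rw [heq]
        exact dvd_add hpdvd hd2
      have hnq : ¬ (p:ℤ) ∣ (q:ℤ) := by
        rw [Int.natCast_dvd_natCast]
        intro hd
        rcases (Nat.Prime.eq_one_or_self_of_dvd hq p hd) with h1 | h1
        · exact hp.one_lt.ne' h1
        · exact hpq h1
      have hdl : (p:ℤ) ∣ ((h i).val : ℤ) := by
        rcases (Int.Prime.dvd_mul' (by exact_mod_cast hp) hpv) with h1 | h1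
        · exact h1
        · exact absurd h1 hnq
      have : (h i).val = 0 := by
        have hlt : (h i).val < p := ZMod.val_lt _
        have hdn : p ∣ (h i).val := Int.natCast_dvd_natCast.1 hdl
        exact Nat.eq_zero_of_dvd_of_lt hdn hlt

      have := ZMod.natCast_rightInverse (n := p) (h i)
      rw [← this]
      rw [show (h i).val = 0 from ‹_›]
      simp
    refine ⟨i, ?_⟩
    have hdiff : thf (⟨p, h⟩ : (p : ℕ) × (Fin g → ZMod p)) i - thf ⟨q, h'⟩ i
        = ((((h i).val : ℤ) * q - ((h' i).val : ℤ) * p : ℤ) : ℝ) / ((p*q : ℕ) : ℝ) := by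
      rw [thf, thf]
      have hp' : ((p:ℝ)) ≠ 0 := by exact_mod_cast hp0.ne'
      have hq' : ((q:ℝ)) ≠ 0 := by exact_mod_cast hq0.ne'
      push_cast
      field_simp
    rw [hdiff]
    have h1 := dZ_int_div (by positivity : 0 < p*q) hi
    have h2 : 1/(M:ℝ) ≤ 1/((p*q:ℕ):ℝ) := by
      apply one_div_le_one_div_of_le (by positivity)
      exact_mod_cast hpqM
    linarith


/-- Lemma (lm-lg-sieve), the multidimensional large sieve inequality: with
`R = {a ∈ ℤ^g : |a_i| ≤ X_i}`, sets `Ω(p) ⊆ (ℤ/pℤ)^g` for primes `p ≤ y`,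
`P(y) = Σ_{p ≤ y} |Ω(p)| p^{−g}` and
`P(a, y) = #{p ≤ y prime : a mod p ∈ Ω(p)}`, one has
`Σ_{a ∈ R} (P(a,y) − P(y))² ≤ C_g · P(y) · ∏ (X_i + y²)` for a constant `C_g`
depending only on `g`. -/
theorem multidimensional_large_sieve (g : ℕ) (hg : 1 ≤ g) :
    ∃ C : ℝ, 0 < C ∧
      ∀ (X : Fin g → ℝ), (∀ i, 1 ≤ X i) →
      ∀ (R : Finset (Fin g → ℤ)), (∀ a : Fin g → ℤ, a ∈ R ↔ ∀ i, |(a i : ℝ)| ≤ X i) →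
      ∀ (y : ℝ), 2 ≤ y →
      ∀ (Ω : (p : ℕ) → Finset (Fin g → ZMod p)),
        ∑ a ∈ R,
          ((((Finset.range (Nat.floor y + 1)).filter
              (fun p => p.Prime ∧ (fun i => ((a i : ZMod p))) ∈ Ω p)).card : ℝ)
            - ∑ p ∈ (Finset.range (Nat.floor y + 1)).filter Nat.Prime,
                ((Ω p).card : ℝ) / (p : ℝ) ^ g) ^ 2
        ≤ C * (∑ p ∈ (Finset.range (Nat.floor y + 1)).filter Nat.Prime,
                ((Ω p).card : ℝ) / (p : ℝ) ^ g)
            * ∏ i, (X i + y ^ 2) := by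
  classical
  refine ⟨(14:ℝ)^g, by positivity, ?_⟩
  intro X hX R hR y hy Ω
  set PP : Finset ℕ := (Finset.range (Nat.floor y + 1)).filter Nat.Prime with hPPdef
  set Py : ℝ := ∑ p ∈ PP, ((Ω p).card : ℝ) / (p : ℝ) ^ g with hPydef
  have hy0 : (0:ℝ) ≤ y := by linarith
  have hysq : (4:ℝ) ≤ y^2 := by nlinarith
  set M : ℕ := ⌈y^2⌉₊ with hMdef
  have hMy : y^2 ≤ (M:ℝ) := Nat.le_ceil _
  have hMy' : (M:ℝ) ≤ y^2 + 1 := le_of_lt (Nat.ceil_lt_add_one (by positivity))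
  have hM1 : 1 ≤ M := by
    by_contra hc
    push_neg at hc
    interval_cases M
    · push_cast at hMy
      linarith
  have hM0 : (0:ℝ) < M := by linarith
  have hprimes : ∀ p ∈ PP, p.Prime := fun p hp => (Finset.mem_filter.1 hp).2
  have hple : ∀ p ∈ PP, (p:ℝ) ≤ y := by
    intro p hp
    have h1 : p < Nat.floor y + 1 := Finset.mem_range.1 (Finset.mem_filter.1 hp).1
    have h2 : p ≤ Nat.floor y := by omega
    calc (p:ℝ) ≤ (Nat.floor y : ℝ) := by exact_mod_cast h2
      _ ≤ y := Nat.floor_le hy0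
  have hMpq : ∀ p ∈ PP, ∀ q ∈ PP, p * q ≤ M := by
    intro p hp q hq
    have h1 : ((p*q : ℕ) : ℝ) ≤ y^2 := by
      push_cast
      calc (p:ℝ)*(q:ℝ) ≤ y * y := by
            apply mul_le_mul (hple p hp) (hple q hq) (by positivity) hy0
        _ = y^2 := by ring
    exact_mod_cast h1.trans hMy
  set N : Fin g → ℕ := fun i => 2*(⌈X i⌉₊ + M) with hNdef
  have hN2M : ∀ i, 2*M ≤ N i := by
    intro i
    show 2*M ≤ 2*(⌈X i⌉₊ + M)
    omega
  have hN1 : ∀ i, 1 ≤ N i := fun i => le_trans (by omega) (hN2M i)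
  set K := PP.sigma (fun p => freqs g p) with hKdef
  set c : ((p : ℕ) × (Fin g → ZMod p)) → ℂ :=
    fun s => Sg g s.1 (Ω s.1) s.2 / ((s.1 : ℂ))^g with hcdef
  -- Step A+B : identify each summand with normSq of an exponential sum
  have hstepAB : ∀ a : Fin g → ℤ,
      ((((Finset.range (Nat.floor y + 1)).filter
          (fun p => p.Prime ∧ (fun i => ((a i : ZMod p))) ∈ Ω p)).card : ℝ) - Py) ^ 2
      = Complex.normSq (∑ s ∈ K, c s * ee (∑ i, (a i : ℝ) * thf s i)) := by
    intro a
    have hA : (((Finset.range (Nat.floor y + 1)).filter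
          (fun p => p.Prime ∧ (fun i => ((a i : ZMod p))) ∈ Ω p)).card : ℝ) - Py
        = ∑ p ∈ PP, ((if (fun i => ((a i : ZMod p))) ∈ Ω p then (1:ℝ) else 0)
            - ((Ω p).card : ℝ)/(p:ℝ)^g) := by
      rw [Finset.sum_sub_distrib, hPydef]
      congr 1
      rw [Finset.card_filter]
      push_cast
      rw [hPPdef, Finset.sum_filter]
      apply Finset.sum_congr rfl
      intro p _
      by_cases h1 : p.Prime <;> by_cases h2 : (fun i => ((a i : ZMod p))) ∈ Ω p <;>
        simp [h1, h2]
    have hB : ((∑ p ∈ PP, ((if (fun i => ((a i : ZMod p))) ∈ Ω p then (1:ℝ) else 0)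
            - ((Ω p).card : ℝ)/(p:ℝ)^g) : ℝ) : ℂ)
        = ∑ s ∈ K, c s * ee (∑ i, (a i : ℝ) * thf s i) := by
      rw [Complex.ofReal_sum]
      rw [hKdef, Finset.sum_sigma]
      apply Finset.sum_congr rfl
      intro p hp
      have hprime := hprimes p hp
      haveI : NeZero p := ⟨hprime.ne_zero⟩
      rw [expansionA hprime.pos (Ω p) a, ← freqs_eq]
      apply Finset.sum_congr rfl
      intro h _
      have hc1 : c ⟨p, h⟩ = Sg g p (Ω p) h / ((p:ℂ))^g := rfl
      rw [hc1]
      congr 1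
      rw [ipf, Finset.sum_div]
      congr 1
      apply Finset.sum_congr rfl
      intro i _
      show ((a i : ℝ) * (((h i).val : ℕ) : ℝ))/p = (a i : ℝ) * ((((h i).val : ℕ) : ℝ)/p)
      ring
    rw [hA]
    set r : ℝ := ∑ p ∈ PP, ((if (fun i => ((a i : ZMod p))) ∈ Ω p then (1:ℝ) else 0)
            - ((Ω p).card : ℝ)/(p:ℝ)^g) with hr
    rw [← hB]
    rw [Complex.normSq_ofReal]
    ring
  -- Step D : apply the core sieve inequality
  have hRbound : ∀ a ∈ R, ∀ i, 2 * |a i| ≤ (N i : ℤ) := by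
    intro a ha i
    have h1 : |(a i : ℝ)| ≤ X i := (hR a).1 ha i
    have h2 : X i ≤ (⌈X i⌉₊ : ℝ) := Nat.le_ceil _
    have h3 : |a i| ≤ (⌈X i⌉₊ : ℤ) := by
      have hcast : ((|a i| : ℤ) : ℝ) ≤ ((⌈X i⌉₊ : ℤ) : ℝ) := by
        push_cast
        exact le_trans h1 h2
      exact_mod_cast hcast
    have h4 : ((N i : ℕ) : ℤ) = 2*((⌈X i⌉₊ : ℤ) + (M : ℤ)) := by
      rw [hNdef]
      push_cast
      ring
    rw [h4]
    have hM0' : (0:ℤ) ≤ (M:ℤ) := by positivity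
    omega
  have hsp := spacing (g := g) PP hprimes M hMpq
  have hcore := core_sieve M hM1 N hN2M K thf hsp c R hRbound
  -- Step E : Parseval bound
  have hstepE : ∑ s ∈ K, Complex.normSq (c s) ≤ Py := by
    rw [hKdef, Finset.sum_sigma, hPydef]
    apply Finset.sum_le_sum
    intro p hp
    have hprime := hprimes p hp
    haveI : NeZero p := ⟨hprime.ne_zero⟩
    have hppos : (0:ℝ) < (p:ℝ)^g := by
      have : (0:ℝ) < p := by exact_mod_cast hprime.pos
      positivity
    have h1 : ∀ h : Fin g → ZMod p, Complex.normSq (c ⟨p, h⟩)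
        = Complex.normSq (Sg g p (Ω p) h) / ((p:ℝ)^g)^2 := by
      intro h
      rw [hcdef]
      show Complex.normSq (Sg g p (Ω p) h / ((p:ℂ))^g) = _
      rw [Complex.normSq_div]
      congr 1
      have : ((p:ℂ))^g = (((p:ℝ)^g : ℝ) : ℂ) := by push_cast; rfl
      rw [this, Complex.normSq_ofReal]
      ring
    rw [Finset.sum_congr rfl (fun h _ => h1 h), ← Finset.sum_div]
    rw [div_le_div_iff₀ (by positivity) hppos]
    have h2 : ∑ h ∈ freqs g p, Complex.normSq (Sg g p (Ω p) h)
        ≤ (p:ℝ)^g * (Ω p).card := by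
      rw [← parsevalB hprime.pos (Ω p)]
      apply Finset.sum_le_sum_of_subset_of_nonneg (Finset.subset_univ _)
      intro h _ _
      exact Complex.normSq_nonneg _
    calc (∑ h ∈ freqs g p, Complex.normSq (Sg g p (Ω p) h)) * (p:ℝ)^g
        ≤ ((p:ℝ)^g * (Ω p).card) * (p:ℝ)^g := by
          apply mul_le_mul_of_nonneg_right h2 (le_of_lt hppos)
      _ = ((Ω p).card : ℝ) * ((p:ℝ)^g)^2 := by ring
  -- Step F : bound the product
  have hstepF : (∏ i, (4*((N i):ℝ) + 2*(M:ℝ)^2/((N i):ℝ)))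
      ≤ ∏ i, ((14:ℝ)*(X i + y^2)) := by
    apply Finset.prod_le_prod
    · intro i _
      have : (0:ℝ) < N i := by exact_mod_cast hN1 i
      positivity
    · intro i _
      have hNi : ((N i : ℕ) : ℝ) = 2*((⌈X i⌉₊ : ℝ) + (M : ℝ)) := by
        rw [hNdef]
        push_cast
        ring
      have hceil : (⌈X i⌉₊ : ℝ) ≤ X i + 1 := le_of_lt (Nat.ceil_lt_add_one (by linarith [hX i]))
      have hceil0 : (0:ℝ) ≤ (⌈X i⌉₊ : ℝ) := by positivity
      have hNpos : (0:ℝ) < (N i : ℝ) := by exact_mod_cast hN1 i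
      have h2M : 2*(M:ℝ) ≤ (N i : ℝ) := by exact_mod_cast hN2M i
      have hdivM : 2*(M:ℝ)^2/((N i):ℝ) ≤ (M:ℝ) := by
        rw [div_le_iff₀ hNpos]
        nlinarith
      have hXi := hX i
      nlinarith [hdivM, hNi, hceil, hMy', hysq, hXi]
  -- Final chain
  have hprod14 : ∏ i, ((14:ℝ)*(X i + y^2)) = (14:ℝ)^g * ∏ i, (X i + y^2) := by
    rw [Finset.prod_mul_distrib, Finset.prod_const, Finset.card_univ, Fintype.card_fin]
  have hPy0 : 0 ≤ Py := by
    rw [hPydef]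
    apply Finset.sum_nonneg
    intro p _
    positivity
  have hB0 : 0 ≤ ∏ i, (4*((N i):ℝ) + 2*(M:ℝ)^2/((N i):ℝ)) := by
    apply Finset.prod_nonneg
    intro i _
    have : (0:ℝ) < N i := by exact_mod_cast hN1 i
    positivity
  calc ∑ a ∈ R, ((((Finset.range (Nat.floor y + 1)).filter
          (fun p => p.Prime ∧ (fun i => ((a i : ZMod p))) ∈ Ω p)).card : ℝ) - Py) ^ 2
      = ∑ a ∈ R, Complex.normSq (∑ s ∈ K, c s * ee (∑ i, (a i : ℝ) * thf s i)) :=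
        Finset.sum_congr rfl (fun a _ => hstepAB a)
    _ ≤ (∏ i, (4*((N i):ℝ) + 2*(M:ℝ)^2/((N i):ℝ))) * ∑ s ∈ K, Complex.normSq (c s) := hcore
    _ ≤ (∏ i, (4*((N i):ℝ) + 2*(M:ℝ)^2/((N i):ℝ))) * Py :=
        mul_le_mul_of_nonneg_left hstepE hB0
    _ ≤ (∏ i, ((14:ℝ)*(X i + y^2))) * Py := mul_le_mul_of_nonneg_right hstepF hPy0
    _ = (14:ℝ)^g * Py * ∏ i, (X i + y^2) := by
        rw [hprod14]
        ring
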